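/- rPCTL is at least as expressive as PCTL(◊,□): for every PCTL(◊,□) formula φ there exists an rPCTL formula φ'' such that for every DTMC M and every state s of M, M,s ⊨ φ if and only if V_M(s, φ'') = 1111. -/

import Mathlib

open MeasureTheory
open scoped Classical ENNReal NNReal

/-! ### Discrete-time Markov chains, paths, cylinder sets -/

/-- A discrete-time Markov chain over atomic propositions `AP` with a finite
state set `S`, an initial state, a stochastic transition function with values
in `[0,1]`, and a labeling function. -/
structure DTMC (AP : Type) (S : Type) [Fintype S] where
  init : S
  trans : S → S → ℝ≥0
  trans_le_one : ∀ s s', trans s s' ≤ 1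
  trans_sum_one : ∀ s, ∑ s', trans s s' = 1
  label : S → Set AP

namespace DTMC

variable {AP S : Type} [Fintype S]

/-- Paths of `M` starting in `s`. -/
def Path (M : DTMC AP S) (s : S) : Type :=
  { π : ℕ → S // π 0 = s ∧ ∀ n, 0 < M.trans (π n) (π (n + 1)) }

/-- Paths of `M` (with arbitrary first state). -/
def PathU (M : DTMC AP S) : Type :=
  { π : ℕ → S // ∀ n, 0 < M.trans (π n) (π (n + 1)) }

/-- Forget the start state of a path. -/
def Path.toU {M : DTMC AP S} {s : S} (π : M.Path s) : M.PathU :=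
  ⟨π.1, π.2.2⟩

/-- The suffix `π[n..]` of a path. -/
def PathU.suffix {M : DTMC AP S} (π : M.PathU) (n : ℕ) : M.PathU :=
  ⟨fun i => π.1 (n + i), fun i => π.2 (n + i)⟩

/-- `ρ 0, …, ρ n` is a path prefix of `M` starting in `s`. -/
def IsPrefix (M : DTMC AP S) (s : S) (ρ : ℕ → S) (n : ℕ) : Prop :=
  ρ 0 = s ∧ ∀ i < n, 0 < M.trans (ρ i) (ρ (i + 1))

/-- The cylinder set of the prefix `ρ 0, …, ρ n`: all paths starting in `s`
that extend this prefix. -/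
def Cyl (M : DTMC AP S) (s : S) (ρ : ℕ → S) (n : ℕ) : Set (M.Path s) :=
  { π | ∀ i ≤ n, π.1 i = ρ i }

/-- The σ-algebra on `Paths(M,s)` generated by the cylinder sets. -/
instance instMeasurableSpacePath (M : DTMC AP S) (s : S) : MeasurableSpace (M.Path s) :=
  .generateFrom { A | ∃ ρ n, M.IsPrefix s ρ n ∧ A = M.Cyl s ρ n }

/-- `μ` is a probability measure on `Paths(M,s)` giving each cylinder set the
product of the transition probabilities along its prefix. -/
def IsCylinderMeasure (M : DTMC AP S) (s : S) (μ : Measure (M.Path s)) : Prop :=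
  IsProbabilityMeasure μ ∧
    ∀ ρ n, M.IsPrefix s ρ n →
      μ (M.Cyl s ρ n) = ∏ j ∈ Finset.range n, (M.trans (ρ j) (ρ (j + 1)) : ℝ≥0∞)

/-- Paths staying in `S'` forever. -/
def Safe (M : DTMC AP S) (s : S) (S' : Set S) : Set (M.Path s) :=
  { π | ∀ n, π.1 n ∈ S' }

/-- Paths staying in `S'` from some point on (all but finitely many positions). -/
def CoBuchi (M : DTMC AP S) (s : S) (S' : Set S) : Set (M.Path s) :=
  { π | ∃ m, ∀ n, m ≤ n → π.1 n ∈ S' }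

/-- Paths visiting `S'` infinitely often. -/
def Buchi (M : DTMC AP S) (s : S) (S' : Set S) : Set (M.Path s) :=
  { π | ∀ m, ∃ n, m ≤ n ∧ π.1 n ∈ S' }

/-- Paths visiting `S'` at least once. -/
def Reach (M : DTMC AP S) (s : S) (S' : Set S) : Set (M.Path s) :=
  { π | ∃ n, π.1 n ∈ S' }

end DTMC

/-! ### Truth values -/

/-- Four-bit truth values `b₁b₂b₃b₄`. -/
structure TV where
  b1 : Bool
  b2 : Bool
  b3 : Bool
  b4 : Bool
deriving DecidableEq

namespace TV

/-- The truth value `1111`. -/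
def top : TV := ⟨true, true, true, true⟩

/-- The truth value `0000`. -/
def bot : TV := ⟨false, false, false, false⟩

instance : LE TV := ⟨fun v w => v.b1 ≤ w.b1 ∧ v.b2 ≤ w.b2 ∧ v.b3 ≤ w.b3 ∧ v.b4 ≤ w.b4⟩

instance : LT TV := ⟨fun v w => v ≤ w ∧ ¬w ≤ v⟩

/-- Minimum (bitwise). -/
def inf (v w : TV) : TV := ⟨v.b1 && w.b1, v.b2 && w.b2, v.b3 && w.b3, v.b4 && w.b4⟩

/-- Maximum (bitwise). -/
def sup (v w : TV) : TV := ⟨v.b1 || w.b1, v.b2 || w.b2, v.b3 || w.b3, v.b4 || w.b4⟩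

/-- `v` lies in `B4`, i.e. its bits are monotonically nondecreasing. -/
def InB4 (v : TV) : Prop := v.b1 ≤ v.b2 ∧ v.b2 ≤ v.b3 ∧ v.b3 ≤ v.b4

end TV

/-- The five truth values `1111 ≻ 0111 ≻ 0011 ≻ 0001 ≻ 0000`. -/
inductive B4 : Type
  | t1111 | t0111 | t0011 | t0001 | t0000
deriving DecidableEq

/-- The bit vector of an element of `B4`. -/
def B4.toTV : B4 → TV
  | .t1111 => ⟨true, true, true, true⟩
  | .t0111 => ⟨false, true, true, true⟩
  | .t0011 => ⟨false, false, true, true⟩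
  | .t0001 => ⟨false, false, false, true⟩
  | .t0000 => ⟨false, false, false, false⟩

/-- `v ⪰ t` for a truth value `v` and `t ∈ B4`: if `t` has `k` leading zeros,
then `v ⪰ t` is determined by bit `k+1` of `v`. -/
def TV.ge4 (v : TV) : B4 → Prop
  | .t1111 => v.b1 = true
  | .t0111 => v.b2 = true
  | .t0011 => v.b3 = true
  | .t0001 => v.b4 = true
  | .t0000 => True

/-- The Boolean truth value of a proposition. -/
noncomputable def boolOf (P : Prop) : Bool := @decide P (Classical.propDecidable P)

/-- Comparison operators `∼ ∈ {<, ≤, =, ≥, >}` for probability thresholds. -/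
inductive PCmp : Type
  | lt | le | eq | ge | gt

/-- `PCmp.holds c a b` expresses `a ∼ b`. -/
def PCmp.holds : PCmp → ℝ≥0∞ → ℝ≥0∞ → Prop
  | .lt, a, b => a < b
  | .le, a, b => a ≤ b
  | .eq, a, b => a = b
  | .ge, a, b => b ≤ a
  | .gt, a, b => b < a

/-- Rational probability thresholds `λ ∈ [0,1] ∩ ℚ`. -/
abbrev QProb : Type := Set.Icc (0 : ℚ) 1

/-- The threshold as an extended nonnegative real. -/
noncomputable def QProb.toENNReal (q : QProb) : ℝ≥0∞ := ENNReal.ofReal ((q : ℚ) : ℝ)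

/-! ### PCTL(◊,□) and rPCTL: shared syntax and semantics -/

/-- Formulas of PCTL(◊,□) (equivalently, of rPCTL, whose temporal operators are
written with dots): `φ ::= p | ¬φ | φ∧φ | φ∨φ | φ→φ | P_{∼λ}[X φ] | P_{∼λ}[◊ φ] | P_{∼λ}[□ φ]`. -/
inductive PF (AP : Type) : Type
  | atom : AP → PF AP
  | not : PF AP → PF AP
  | and : PF AP → PF AP → PF AP
  | or : PF AP → PF AP → PF AP
  | imp : PF AP → PF AP → PF AP
  | probNext : PCmp → QProb → PF AP → PF AP
  | probEv : PCmp → QProb → PF AP → PF AP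
  | probAlw : PCmp → QProb → PF AP → PF AP

namespace PF

/-- `φ` contains no implications. -/
def NoImp {AP : Type} : PF AP → Prop
  | .atom _ => True
  | .not φ => φ.NoImp
  | .and φ ψ => φ.NoImp ∧ ψ.NoImp
  | .or φ ψ => φ.NoImp ∧ ψ.NoImp
  | .imp _ _ => False
  | .probNext _ _ φ => φ.NoImp
  | .probEv _ _ φ => φ.NoImp
  | .probAlw _ _ φ => φ.NoImp

/-- Rewriting every implication `ψ₀ → ψ₁` as `¬ψ₀ ∨ ψ₁`. -/
def rmImp {AP : Type} : PF AP → PF AP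
  | .atom p => .atom p
  | .not φ => .not φ.rmImp
  | .and φ ψ => .and φ.rmImp ψ.rmImp
  | .or φ ψ => .or φ.rmImp ψ.rmImp
  | .imp φ ψ => .or (.not φ.rmImp) ψ.rmImp
  | .probNext c l φ => .probNext c l φ.rmImp
  | .probEv c l φ => .probEv c l φ.rmImp
  | .probAlw c l φ => .probAlw c l φ.rmImp

end PF

/-- The standard PCTL semantics `M,s ⊨ φ`, relative to the family of cylinder-set
measures `μ s` on `Paths(M,s)`. -/
def PCTL.Sat {AP S : Type} [Fintype S] (M : DTMC AP S)
    (μ : ∀ s : S, MeasureTheory.Measure (M.Path s)) : PF AP → S → Prop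
  | .atom p, s => p ∈ M.label s
  | .not φ, s => ¬ PCTL.Sat M μ φ s
  | .and φ ψ, s => PCTL.Sat M μ φ s ∧ PCTL.Sat M μ ψ s
  | .or φ ψ, s => PCTL.Sat M μ φ s ∨ PCTL.Sat M μ ψ s
  | .imp φ ψ, s => PCTL.Sat M μ φ s → PCTL.Sat M μ ψ s
  | .probNext c l φ, s =>
      c.holds (μ s { π | PCTL.Sat M μ φ (π.1 1) }) l.toENNReal
  | .probEv c l φ, s =>
      c.holds (μ s { π | ∃ n, PCTL.Sat M μ φ (π.1 n) }) l.toENNReal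
  | .probAlw c l φ, s =>
      c.holds (μ s { π | ∀ n, PCTL.Sat M μ φ (π.1 n) }) l.toENNReal

/-- The rPCTL evaluation function `V_M`, mapping a state and a formula to a
truth value, relative to the family of cylinder-set measures `μ s`. -/
noncomputable def rPCTL.val {AP S : Type} [Fintype S] (M : DTMC AP S)
    (μ : ∀ s : S, MeasureTheory.Measure (M.Path s)) : PF AP → S → TV
  | .atom p, s => if p ∈ M.label s then TV.top else TV.bot
  | .not φ, s => if rPCTL.val M μ φ s = TV.top then TV.bot else TV.top
  | .and φ ψ, s => (rPCTL.val M μ φ s).inf (rPCTL.val M μ ψ s)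
  | .or φ ψ, s => (rPCTL.val M μ φ s).sup (rPCTL.val M μ ψ s)
  | .imp φ ψ, s =>
      if rPCTL.val M μ φ s ≤ rPCTL.val M μ ψ s then TV.top else rPCTL.val M μ ψ s
  | .probNext c l φ, s =>
      ⟨boolOf (c.holds (μ s { π | (rPCTL.val M μ φ (π.1 1)).b1 = true }) l.toENNReal),
       boolOf (c.holds (μ s { π | (rPCTL.val M μ φ (π.1 1)).b2 = true }) l.toENNReal),
       boolOf (c.holds (μ s { π | (rPCTL.val M μ φ (π.1 1)).b3 = true }) l.toENNReal),
       boolOf (c.holds (μ s { π | (rPCTL.val M μ φ (π.1 1)).b4 = true }) l.toENNReal)⟩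
  | .probEv c l φ, s =>
      ⟨boolOf (c.holds (μ s { π | ∃ n, (rPCTL.val M μ φ (π.1 n)).b1 = true }) l.toENNReal),
       boolOf (c.holds (μ s { π | ∃ n, (rPCTL.val M μ φ (π.1 n)).b2 = true }) l.toENNReal),
       boolOf (c.holds (μ s { π | ∃ n, (rPCTL.val M μ φ (π.1 n)).b3 = true }) l.toENNReal),
       boolOf (c.holds (μ s { π | ∃ n, (rPCTL.val M μ φ (π.1 n)).b4 = true }) l.toENNReal)⟩
  | .probAlw c l φ, s =>
      ⟨boolOf (c.holds (μ s { π | ∀ n, (rPCTL.val M μ φ (π.1 n)).b1 = true }) l.toENNReal),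
       boolOf (c.holds (μ s { π | ∃ m, ∀ n, m ≤ n → (rPCTL.val M μ φ (π.1 n)).b2 = true }) l.toENNReal),
       boolOf (c.holds (μ s { π | ∀ m, ∃ n, m ≤ n ∧ (rPCTL.val M μ φ (π.1 n)).b3 = true }) l.toENNReal),
       boolOf (c.holds (μ s { π | ∃ n, (rPCTL.val M μ φ (π.1 n)).b4 = true }) l.toENNReal)⟩

/-- The satisfaction set `Sat(φ, t) = {s ∈ S : V_M(s,φ) ⪰ t}`. -/
def rPCTL.SatSet {AP S : Type} [Fintype S] (M : DTMC AP S)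
    (μ : ∀ s : S, MeasureTheory.Measure (M.Path s)) (φ : PF AP) (t : B4) : Set S :=
  { s | (rPCTL.val M μ φ s).ge4 t }

/-! ### Auxiliary material for the proof -/

/-- Flip a comparison operator. -/
def PCmp.flip : PCmp → PCmp
  | .lt => .gt
  | .le => .ge
  | .eq => .eq
  | .ge => .le
  | .gt => .lt

/-- The complementary threshold `1 - λ`. -/
def QProb.compl (q : QProb) : QProb :=
  ⟨1 - q.1, ⟨by have := q.2.2; linarith, by have := q.2.1; linarith⟩⟩

lemma QProb.toENNReal_le_one (q : QProb) : q.toENNReal ≤ 1 := by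
  have h := q.2.2
  have : ((q.1 : ℚ) : ℝ) ≤ 1 := by exact_mod_cast h
  calc QProb.toENNReal q = ENNReal.ofReal ((q.1 : ℚ) : ℝ) := rfl
    _ ≤ ENNReal.ofReal 1 := ENNReal.ofReal_le_ofReal this
    _ = 1 := ENNReal.ofReal_one

lemma QProb.compl_toENNReal (q : QProb) : q.compl.toENNReal = 1 - q.toENNReal := by
  have h0 : (0 : ℝ) ≤ ((q.1 : ℚ) : ℝ) := by exact_mod_cast q.2.1
  show ENNReal.ofReal (((1 - q.1 : ℚ)) : ℝ) = 1 - ENNReal.ofReal ((q.1 : ℚ) : ℝ)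
  rw [show (((1 - q.1 : ℚ)) : ℝ) = (1 : ℝ) - ((q.1 : ℚ) : ℝ) by push_cast; ring,
    ENNReal.ofReal_sub _ h0, ENNReal.ofReal_one]

lemma PCmp.holds_flip (c : PCmp) {a l : ℝ≥0∞} (ha : a ≤ 1) (hl : l ≤ 1) :
    c.flip.holds (1 - a) (1 - l) ↔ c.holds a l := by
  have hle : ∀ x y : ℝ≥0∞, x ≤ 1 → y ≤ 1 → ((1 - x ≤ 1 - y) ↔ y ≤ x) := by
    intro x y hx hy
    exact ENNReal.sub_le_sub_iff_left hy ENNReal.one_ne_top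
  have hlt : ∀ x y : ℝ≥0∞, x ≤ 1 → y ≤ 1 → ((1 - x < 1 - y) ↔ y < x) := by
    intro x y hx hy
    rw [lt_iff_not_ge, lt_iff_not_ge, hle y x hy hx]
  cases c with
  | lt => exact hlt l a hl ha
  | le => exact hle l a hl ha
  | eq =>
    constructor
    · intro h
      exact ((ENNReal.sub_right_inj ENNReal.one_ne_top ha hl).mp h)
    · intro h
      show (1 : ℝ≥0∞) - a = 1 - l
      rw [h]
  | ge => exact hle a l ha hl
  | gt => exact hlt a l ha hl

namespace DTMC

variable {AP S : Type} [Fintype S]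

lemma measurableSet_coord (M : DTMC AP S) (s : S) (n : ℕ) (t : S) :
    MeasurableSet {π : M.Path s | π.1 n = t} := by
  have key : {π : M.Path s | π.1 n = t} =
      ⋃ (f : Fin (n + 1) → S) (_ : f ⟨n, Nat.lt_succ_self n⟩ = t),
        M.Cyl s (fun i => f ⟨min i n, Nat.lt_succ_of_le (min_le_right i n)⟩) n := by
    ext π
    simp only [Set.mem_setOf_eq, Set.mem_iUnion, DTMC.Cyl]
    constructor
    · intro h
      refine ⟨fun i => π.1 i, by simpa using h, ?_⟩
      intro i hi
      simp [Nat.min_eq_left hi]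
    · rintro ⟨f, hf, hπ⟩
      have := hπ n le_rfl
      simpa [hf] using this
  rw [key]
  apply MeasurableSet.iUnion; intro f
  apply MeasurableSet.iUnion; intro hf
  set ρ : ℕ → S := fun i => f ⟨min i n, Nat.lt_succ_of_le (min_le_right i n)⟩ with hρ
  by_cases hpre : M.IsPrefix s ρ n
  · exact MeasurableSpace.measurableSet_generateFrom ⟨ρ, n, hpre, rfl⟩
  · have : M.Cyl s ρ n = ∅ := by
      ext π
      simp only [DTMC.Cyl, Set.mem_setOf_eq, Set.mem_empty_iff_false, iff_false]
      intro h
      apply hpre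
      constructor
      · rw [← h 0 (Nat.zero_le n)]; exact π.2.1
      · intro i hi
        rw [← h i (le_of_lt hi), ← h (i + 1) hi]
        exact π.2.2 i
    rw [this]; exact MeasurableSet.empty

lemma measurableSet_safe (M : DTMC AP S) (s : S) (S' : Set S) :
    MeasurableSet {π : M.Path s | ∀ n, π.1 n ∈ S'} := by
  have key : {π : M.Path s | ∀ n, π.1 n ∈ S'} =
      ⋂ n, ⋃ (t : S) (_ : t ∈ S'), {π : M.Path s | π.1 n = t} := by
    ext π
    simp only [Set.mem_setOf_eq, Set.mem_iInter, Set.mem_iUnion]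
    constructor
    · intro h n; exact ⟨π.1 n, h n, rfl⟩
    · rintro h n; obtain ⟨t, ht, hπ⟩ := h n; rw [hπ]; exact ht
  rw [key]
  exact MeasurableSet.iInter fun n => MeasurableSet.iUnion fun t =>
    MeasurableSet.iUnion fun _ => M.measurableSet_coord s n t

end DTMC

/-- The translation of PCTL(◊,□) into rPCTL: replace each `P_{∼λ}[□ ψ]` by
`P_{∼'(1-λ)}[◊ ¬ψ]`. -/
def PF.tr {AP : Type} : PF AP → PF AP
  | .atom p => .atom p
  | .not φ => .not φ.tr
  | .and φ ψ => .and φ.tr ψ.tr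
  | .or φ ψ => .or φ.tr ψ.tr
  | .imp φ ψ => .imp φ.tr ψ.tr
  | .probNext c l φ => .probNext c l φ.tr
  | .probEv c l φ => .probEv c l φ.tr
  | .probAlw c l φ => .probEv c.flip l.compl (.not φ.tr)

lemma boolOf_iff (P : Prop) : boolOf P = true ↔ P := by
  unfold boolOf
  exact @decide_eq_true_iff P (Classical.propDecidable P)

lemma tv_ite_eq (P Q : Prop) [Decidable P] [Decidable Q] (h : P ↔ Q) :
    (if P then TV.top else TV.bot) = (if Q then TV.top else TV.bot) := by
  by_cases hp : P
  · rw [if_pos hp, if_pos (h.mp hp)]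
  · rw [if_neg hp, if_neg (fun hq => hp (h.mpr hq))]

lemma key_lemma {AP : Type} (φ : PF AP) (S : Type) [Fintype S] (M : DTMC AP S)
    (μ : ∀ s : S, MeasureTheory.Measure (M.Path s))
    (h : ∀ s : S, M.IsCylinderMeasure s (μ s)) (s : S) :
    rPCTL.val M μ φ.tr s = if PCTL.Sat M μ φ s then TV.top else TV.bot := by
  induction φ generalizing s with
  | atom p => rfl
  | not φ ih =>
    show (if rPCTL.val M μ φ.tr s = TV.top then TV.bot else TV.top) = _
    rw [ih]
    by_cases hs : PCTL.Sat M μ φ s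
    · simp [PCTL.Sat, hs]
    · simp [PCTL.Sat, hs, TV.top, TV.bot]
  | and φ ψ ihφ ihψ =>
    show (rPCTL.val M μ φ.tr s).inf (rPCTL.val M μ ψ.tr s) = _
    rw [ihφ, ihψ]
    by_cases h1 : PCTL.Sat M μ φ s <;> by_cases h2 : PCTL.Sat M μ ψ s <;>
      simp [PCTL.Sat, h1, h2, TV.inf, TV.top, TV.bot]
  | or φ ψ ihφ ihψ =>
    show (rPCTL.val M μ φ.tr s).sup (rPCTL.val M μ ψ.tr s) = _
    rw [ihφ, ihψ]
    by_cases h1 : PCTL.Sat M μ φ s <;> by_cases h2 : PCTL.Sat M μ ψ s <;>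
      simp [PCTL.Sat, h1, h2, TV.sup, TV.top, TV.bot]
  | imp φ ψ ihφ ihψ =>
    show (if rPCTL.val M μ φ.tr s ≤ rPCTL.val M μ ψ.tr s then TV.top
          else rPCTL.val M μ ψ.tr s) = _
    rw [ihφ, ihψ]
    by_cases h1 : PCTL.Sat M μ φ s <;> by_cases h2 : PCTL.Sat M μ ψ s <;>
      simp only [if_pos, if_neg, h1, h2, if_true, if_false, PCTL.Sat]
    · have : (TV.top : TV) ≤ TV.top := ⟨le_rfl, le_rfl, le_rfl, le_rfl⟩
      simp [this, h1, h2]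
    · have : ¬ ((TV.top : TV) ≤ TV.bot) := by
        rintro ⟨h, -⟩; exact absurd h (by decide)
      simp [this, h1, h2]
    · have : (TV.bot : TV) ≤ TV.top := by
        refine ⟨?_, ?_, ?_, ?_⟩ <;> simp [TV.top, TV.bot]
      simp [this, h1, h2]
    · have : (TV.bot : TV) ≤ TV.bot := ⟨le_rfl, le_rfl, le_rfl, le_rfl⟩
      simp [this, h1, h2]
  | probNext c l φ ih =>
    have hset : ∀ k : TV → Bool, (k TV.top = true) → (k TV.bot = false) →
        {π : M.Path s | k (rPCTL.val M μ φ.tr (π.1 1)) = true} =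
        {π : M.Path s | PCTL.Sat M μ φ (π.1 1)} := by
      intro k hkt hkb
      ext π
      simp only [Set.mem_setOf_eq, ih]
      by_cases hs : PCTL.Sat M μ φ (π.1 1) <;> simp [hs, hkt, hkb]
    show (⟨_, _, _, _⟩ : TV) = _
    rw [hset TV.b1 rfl rfl, hset TV.b2 rfl rfl, hset TV.b3 rfl rfl, hset TV.b4 rfl rfl]
    by_cases hc : c.holds (μ s {π : M.Path s | PCTL.Sat M μ φ (π.1 1)}) l.toENNReal
    · simp only [PCTL.Sat, if_pos hc]
      have : boolOf (c.holds (μ s {π : M.Path s | PCTL.Sat M μ φ (π.1 1)}) l.toENNReal)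
          = true := (boolOf_iff _).mpr hc
      simp [this, TV.top]
      exact (if_pos hc).symm
    · simp only [PCTL.Sat, if_neg hc]
      have : boolOf (c.holds (μ s {π : M.Path s | PCTL.Sat M μ φ (π.1 1)}) l.toENNReal)
          = false := by
        rw [← Bool.not_eq_true, boolOf_iff]; exact hc
      simp [this, TV.bot]
      exact (if_neg hc).symm
  | probEv c l φ ih =>
    have hset : ∀ k : TV → Bool, (k TV.top = true) → (k TV.bot = false) →
        {π : M.Path s | ∃ n, k (rPCTL.val M μ φ.tr (π.1 n)) = true} =
        {π : M.Path s | ∃ n, PCTL.Sat M μ φ (π.1 n)} := by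
      intro k hkt hkb
      ext π
      simp only [Set.mem_setOf_eq, ih]
      constructor
      · rintro ⟨n, hn⟩
        refine ⟨n, ?_⟩
        by_contra hs
        rw [if_neg hs, hkb] at hn
        exact Bool.false_ne_true hn
      · rintro ⟨n, hn⟩
        exact ⟨n, by rw [if_pos hn, hkt]⟩
    show (⟨_, _, _, _⟩ : TV) = _
    rw [hset TV.b1 rfl rfl, hset TV.b2 rfl rfl, hset TV.b3 rfl rfl, hset TV.b4 rfl rfl]
    by_cases hc : c.holds (μ s {π : M.Path s | ∃ n, PCTL.Sat M μ φ (π.1 n)}) l.toENNReal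
    · simp only [PCTL.Sat, if_pos hc]
      have : boolOf (c.holds (μ s {π : M.Path s | ∃ n, PCTL.Sat M μ φ (π.1 n)}) l.toENNReal)
          = true := (boolOf_iff _).mpr hc
      simp [this, TV.top]
      exact (if_pos hc).symm
    · simp only [PCTL.Sat, if_neg hc]
      have : boolOf (c.holds (μ s {π : M.Path s | ∃ n, PCTL.Sat M μ φ (π.1 n)}) l.toENNReal)
          = false := by
        rw [← Bool.not_eq_true, boolOf_iff]; exact hc
      simp [this, TV.bot]
      exact (if_neg hc).symm
  | probAlw c l φ ih =>
    -- translated into `probEv c.flip l.compl (.not φ.tr)`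
    have hval : ∀ s' : S, rPCTL.val M μ (PF.not φ.tr) s' =
        if PCTL.Sat M μ φ s' then TV.bot else TV.top := by
      intro s'
      show (if rPCTL.val M μ φ.tr s' = TV.top then TV.bot else TV.top) = _
      rw [ih]
      by_cases hs : PCTL.Sat M μ φ s'
      · simp [hs]
      · simp [hs, TV.top, TV.bot]
    have hset : ∀ k : TV → Bool, (k TV.top = true) → (k TV.bot = false) →
        {π : M.Path s | ∃ n, k (rPCTL.val M μ (PF.not φ.tr) (π.1 n)) = true} =
        {π : M.Path s | ∀ n, PCTL.Sat M μ φ (π.1 n)}ᶜ := by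
      intro k hkt hkb
      ext π
      simp only [Set.mem_setOf_eq, Set.mem_compl_iff, hval, not_forall]
      constructor
      · rintro ⟨n, hn⟩
        refine ⟨n, ?_⟩
        intro hs
        rw [if_pos hs, hkb] at hn
        exact Bool.false_ne_true hn
      · rintro ⟨n, hn⟩
        exact ⟨n, by rw [if_neg hn, hkt]⟩
    have hmeas : MeasurableSet {π : M.Path s | ∀ n, PCTL.Sat M μ φ (π.1 n)} := by
      have := M.measurableSet_safe s {t | PCTL.Sat M μ φ t}
      exact this
    have hprob : MeasureTheory.IsProbabilityMeasure (μ s) := (h s).1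
    have hcompl : μ s ({π : M.Path s | ∀ n, PCTL.Sat M μ φ (π.1 n)}ᶜ) =
        1 - μ s {π : M.Path s | ∀ n, PCTL.Sat M μ φ (π.1 n)} :=
      MeasureTheory.prob_compl_eq_one_sub hmeas
    have ha : μ s {π : M.Path s | ∀ n, PCTL.Sat M μ φ (π.1 n)} ≤ 1 :=
      MeasureTheory.prob_le_one
    have hiff : c.flip.holds (μ s ({π : M.Path s | ∀ n, PCTL.Sat M μ φ (π.1 n)}ᶜ))
          l.compl.toENNReal ↔
        c.holds (μ s {π : M.Path s | ∀ n, PCTL.Sat M μ φ (π.1 n)}) l.toENNReal := by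
      rw [hcompl, QProb.compl_toENNReal]
      exact PCmp.holds_flip c ha l.toENNReal_le_one
    show (⟨_, _, _, _⟩ : TV) = _
    rw [hset TV.b1 rfl rfl, hset TV.b2 rfl rfl, hset TV.b3 rfl rfl, hset TV.b4 rfl rfl]
    by_cases hc : c.holds (μ s {π : M.Path s | ∀ n, PCTL.Sat M μ φ (π.1 n)}) l.toENNReal
    · simp only [PCTL.Sat, if_pos hc]
      have : boolOf (c.flip.holds
          (μ s ({π : M.Path s | ∀ n, PCTL.Sat M μ φ (π.1 n)}ᶜ)) l.compl.toENNReal)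
          = true := (boolOf_iff _).mpr (hiff.mpr hc)
      simp [this, TV.top, hc]
    · simp only [PCTL.Sat, if_neg hc]
      have : boolOf (c.flip.holds
          (μ s ({π : M.Path s | ∀ n, PCTL.Sat M μ φ (π.1 n)}ᶜ)) l.compl.toENNReal)
          = false := by
        rw [← Bool.not_eq_true, boolOf_iff]; exact fun hh => hc (hiff.mp hh)
      simp [this, TV.bot, hc]

/-- rPCTL is at least as expressive as PCTL(◊,□): for every
PCTL(◊,□) formula `φ` there is an rPCTL formula `φ''` such that for every DTMC
`M` and state `s`, `M,s ⊨ φ` iff `V_M(s, φ'') = 1111`. -/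
theorem rpctl_at_least_as_expressive_as_pctl {AP : Type} (φ : PF AP) :
    ∃ φ'' : PF AP,
      ∀ (S : Type) [Fintype S] (M : DTMC AP S)
        (μ : ∀ s : S, MeasureTheory.Measure (M.Path s)),
        (∀ s : S, M.IsCylinderMeasure s (μ s)) →
          ∀ s : S, PCTL.Sat M μ φ s ↔ rPCTL.val M μ φ'' s = TV.top := by
  refine ⟨φ.tr, ?_⟩
  intro S _ M μ h s
  rw [key_lemma φ S M μ h s]
  by_cases hs : PCTL.Sat M μ φ s
  · simp [hs]
  · rw [if_neg hs]
    exact iff_of_false hs (by decide)
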